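/- arXiv:1304.6629 — 2 statements merged into one kernel-verified Lean document; each statement's English description precedes it below -/
import Mathlib

section
/- Let Xⁿ (n ≥ 1) and X be continuous ℝ^d-valued stochastic processes on [0,T]. Suppose there exist α₀ > 0 and nonnegative random variables Kₙ, K such that almost surely |Xⁿ(t) − Xⁿ(s)| ≤ Kₙ|t − s|^{α₀} and |X(t) − X(s)| ≤ K|t − s|^{α₀} for all s, t ∈ [0,T], with sup_n E[Kₙ] < ∞ and E[K] < ∞. If for every fixed t ∈ [0,T] the random variables |Xⁿ(t) − X(t)| converge to 0 in probability as n → ∞, then sup_{0≤t≤T} |Xⁿ(t) − X(t)| converges to 0 in probability as n → ∞. -/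
open MeasureTheory Set Filter
open scoped ENNReal Topology

/-- Let `Xⁿ` and `X` be continuous `ℝ^d`-valued processes on `[0, T]`.
Suppose there are `α₀ > 0` and nonnegative random variables `Kₙ, K` such that almost
surely `|Xⁿ(t) − Xⁿ(s)| ≤ Kₙ |t − s|^{α₀}` and `|X(t) − X(s)| ≤ K |t − s|^{α₀}` for all
`s, t ∈ [0, T]`, with `sup_n E[Kₙ] < ∞` and `E[K] < ∞`.  If for every fixed `t ∈ [0, T]`
the random variables `|Xⁿ(t) − X(t)|` converge to `0` in probability, then
`sup_{0 ≤ t ≤ T} |Xⁿ(t) − X(t)|` converges to `0` in probability. -/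
theorem sup_tendsto_in_measure_of_pointwise
    {Ω : Type*} {m0 : MeasurableSpace Ω} (P : Measure Ω) [IsProbabilityMeasure P]
    {d : ℕ} (T : ℝ) (hT : 0 < T)
    (Xn : ℕ → ℝ → Ω → EuclideanSpace ℝ (Fin d))
    (X : ℝ → Ω → EuclideanSpace ℝ (Fin d))
    (hXncont : ∀ n ω, ContinuousOn (fun t => Xn n t ω) (Icc 0 T))
    (hXcont : ∀ ω, ContinuousOn (fun t => X t ω) (Icc 0 T))
    (α₀ : ℝ) (hα₀ : 0 < α₀)
    (Kn : ℕ → Ω → ℝ) (K : Ω → ℝ)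
    (hKnmeas : ∀ n, Measurable (Kn n)) (hKmeas : Measurable K)
    (hKnpos : ∀ n ω, 0 ≤ Kn n ω) (hKpos : ∀ ω, 0 ≤ K ω)
    (hKn : ∀ n, ∀ᵐ ω ∂P, ∀ s ∈ Icc (0 : ℝ) T, ∀ t ∈ Icc (0 : ℝ) T,
      ‖Xn n t ω - Xn n s ω‖ ≤ Kn n ω * |t - s| ^ α₀)
    (hK : ∀ᵐ ω ∂P, ∀ s ∈ Icc (0 : ℝ) T, ∀ t ∈ Icc (0 : ℝ) T,
      ‖X t ω - X s ω‖ ≤ K ω * |t - s| ^ α₀)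
    (hKnint : ∃ C : ℝ≥0∞, C < ⊤ ∧ ∀ n, (∫⁻ ω, ENNReal.ofReal (Kn n ω) ∂P) ≤ C)
    (hKint : (∫⁻ ω, ENNReal.ofReal (K ω) ∂P) < ⊤)
    (hptwise : ∀ t ∈ Icc (0 : ℝ) T,
      TendstoInMeasure P (fun n ω => Xn n t ω) atTop (fun ω => X t ω)) :
    TendstoInMeasure P (fun n ω => ⨆ t : Icc (0 : ℝ) T, ‖Xn n t.1 ω - X t.1 ω‖)
      atTop (fun _ => (0 : ℝ)) := by
  haveI : Nonempty (Icc (0:ℝ) T) := ⟨⟨0, le_refl 0, hT.le⟩⟩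
  rw [tendstoInMeasure_iff_dist]
  intro ε hε
  rw [ENNReal.tendsto_atTop_zero]
  intro δ hδ
  obtain ⟨C, hC, hCn⟩ := hKnint
  set D : ℝ≥0∞ := C + ∫⁻ ω, ENNReal.ofReal (K ω) ∂P with hDdef
  have hDlt : D ≠ ⊤ := ENNReal.add_ne_top.2 ⟨hC.ne, hKint.ne⟩
  set δ₂ : ℝ≥0∞ := min δ 1 with hδ₂def
  have hδ₂pos : (0:ℝ≥0∞) < δ₂ / 2 :=
    ENNReal.div_pos (lt_min hδ zero_lt_one).ne' (by norm_num)
  have hδ₂top : δ₂ / 2 ≠ ⊤ :=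
    (lt_of_le_of_lt (le_trans ENNReal.half_le_self (min_le_right δ 1)) ENNReal.one_lt_top).ne
  have hδ₂le : δ₂ ≤ δ := min_le_left _ _
  -- choose the cutoff `c`
  set c : ℝ := (D / (δ₂ / 2)).toReal + 1 with hcdef
  have hc0 : 0 < c := by positivity
  have hdivlt : D / (δ₂ / 2) ≠ ⊤ := (ENNReal.div_lt_top hDlt hδ₂pos.ne').ne
  have hcD : D / ENNReal.ofReal c ≤ δ₂ / 2 := by
    rw [ENNReal.div_le_iff_le_mul (Or.inl (by simp [hc0])) (Or.inr hδ₂pos.ne')]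
    have h1 : D / (δ₂ / 2) ≤ ENNReal.ofReal c := by
      rw [hcdef]
      calc D / (δ₂ / 2) = ENNReal.ofReal ((D / (δ₂ / 2)).toReal) :=
            (ENNReal.ofReal_toReal hdivlt).symm
        _ ≤ _ := ENNReal.ofReal_le_ofReal (by linarith)
    calc D = D / (δ₂ / 2) * (δ₂ / 2) :=
          (ENNReal.div_mul_cancel hδ₂pos.ne' hδ₂top).symm
      _ ≤ ENNReal.ofReal c * (δ₂ / 2) := mul_le_mul_left h1 _
      _ = (δ₂ / 2) * ENNReal.ofReal c := mul_comm _ _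
  -- Markov inequality
  have hMar : ∀ n, P {ω | c ≤ Kn n ω + K ω} ≤ δ₂ / 2 := by
    intro n
    have haem : AEMeasurable (fun ω => ENNReal.ofReal (Kn n ω + K ω)) P :=
      (((hKnmeas n).add hKmeas).ennreal_ofReal).aemeasurable
    have h1 : ENNReal.ofReal c * P {ω | c ≤ Kn n ω + K ω} ≤ D := by
      calc ENNReal.ofReal c * P {ω | c ≤ Kn n ω + K ω}
          ≤ ENNReal.ofReal c *
            P {ω | ENNReal.ofReal c ≤ ENNReal.ofReal (Kn n ω + K ω)} := by
            refine mul_le_mul_right (measure_mono fun ω hω => ?_) _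
            exact ENNReal.ofReal_le_ofReal hω
        _ ≤ ∫⁻ ω, ENNReal.ofReal (Kn n ω + K ω) ∂P :=
            mul_meas_ge_le_lintegral₀ haem _
        _ = (∫⁻ ω, ENNReal.ofReal (Kn n ω) ∂P) + ∫⁻ ω, ENNReal.ofReal (K ω) ∂P := by
            simp_rw [fun ω => ENNReal.ofReal_add (hKnpos n ω) (hKpos ω)]
            exact lintegral_add_left ((hKnmeas n).ennreal_ofReal) _
        _ ≤ D := add_le_add_left (hCn n) _
    have h2 : P {ω | c ≤ Kn n ω + K ω} ≤ D / ENNReal.ofReal c := by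
      rw [ENNReal.le_div_iff_mul_le (Or.inl (by simp [hc0])) (Or.inl (by simp))]
      rw [mul_comm]; exact h1
    exact h2.trans hcD
  -- choose mesh size
  set h : ℝ := (ε / (2 * c)) ^ (α₀⁻¹) with hhdef
  have hh0 : 0 < h := Real.rpow_pos_of_pos (by positivity) _
  have hhα : h ^ α₀ = ε / (2 * c) := Real.rpow_inv_rpow (by positivity) hα₀.ne'
  set N : ℕ := max 1 ⌈T / h⌉₊ with hNdef
  have hN0 : 0 < (N : ℝ) := by
    have h1 : (1:ℕ) ≤ N := le_max_left _ _
    exact_mod_cast h1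
  set η : ℝ := T / N with hηdef
  have hη0 : 0 < η := div_pos hT hN0
  have hηh : η ≤ h := by
    rw [hηdef, div_le_iff₀ hN0]
    have h1 : T / h ≤ (⌈T / h⌉₊ : ℝ) := Nat.le_ceil _
    have h2 : ((⌈T / h⌉₊ : ℕ) : ℝ) ≤ (N : ℝ) := by exact_mod_cast le_max_right 1 ⌈T / h⌉₊
    calc T = (T / h) * h := by field_simp
      _ ≤ (N : ℝ) * h := mul_le_mul_of_nonneg_right (h1.trans h2) hh0.le
      _ = h * N := mul_comm _ _
  have hNη : (N : ℝ) * η = T := by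
    rw [hηdef]; field_simp
  have hgrid : ∀ i ≤ N, (i:ℝ) * η ∈ Icc (0:ℝ) T := by
    intro i hi
    constructor
    · positivity
    · calc (i:ℝ) * η ≤ (N:ℝ) * η :=
          mul_le_mul_of_nonneg_right (by exact_mod_cast hi) hη0.le
        _ = T := hNη
  have hne : (Finset.range (N+1)).Nonempty := ⟨0, by simp⟩
  set G : ℕ → Ω → ℝ := fun n ω =>
    (Finset.range (N+1)).sup' hne (fun i => ‖Xn n ((i:ℝ)*η) ω - X ((i:ℝ)*η) ω‖) with hGdef
  -- a.e. bound on the sup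
  have hbound : ∀ n, ∀ᵐ ω ∂P,
      (⨆ t : Icc (0:ℝ) T, ‖Xn n t.1 ω - X t.1 ω‖)
        ≤ (Kn n ω + K ω) * η ^ α₀ + G n ω := by
    intro n
    filter_upwards [hKn n, hK] with ω hω1 hω2
    have hGnn : 0 ≤ G n ω := by
      simp only [hGdef]
      exact le_trans (norm_nonneg _)
        (Finset.le_sup' (fun i : ℕ => ‖Xn n ((i:ℝ)*η) ω - X ((i:ℝ)*η) ω‖)
          (show (0:ℕ) ∈ Finset.range (N+1) from Finset.mem_range.2 (by omega)))
    refine Real.iSup_le ?_ ?_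
    · rintro ⟨t, ht⟩
      set i : ℕ := ⌊t / η⌋₊ with hidef
      have htη : 0 ≤ t / η := div_nonneg ht.1 hη0.le
      have hiN : i ≤ N := by
        have h1 : t / η ≤ (N:ℝ) := by
          rw [div_le_iff₀ hη0]
          calc t ≤ T := ht.2
            _ = (N:ℝ) * η := hNη.symm
        calc i = ⌊t/η⌋₊ := rfl
          _ ≤ ⌊(N:ℝ)⌋₊ := Nat.floor_le_floor h1
          _ = N := Nat.floor_natCast N
      have hle : (i:ℝ)*η ≤ t := by
        have h1 : (i:ℝ) ≤ t/η := Nat.floor_le htη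
        calc (i:ℝ)*η ≤ (t/η)*η := mul_le_mul_of_nonneg_right h1 hη0.le
          _ = t := div_mul_cancel₀ t hη0.ne'
      have hlt : t - (i:ℝ)*η ≤ η := by
        have h1 : t/η < (i:ℝ) + 1 := Nat.lt_floor_add_one (t/η)
        have h2 : t < ((i:ℝ) + 1) * η := by
          calc t = (t/η)*η := (div_mul_cancel₀ t hη0.ne').symm
            _ < ((i:ℝ)+1)*η := by exact mul_lt_mul_of_pos_right h1 hη0
        nlinarith
      have habs : |t - (i:ℝ)*η| ≤ η := by
        rw [abs_of_nonneg (by linarith)]; exact hlt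
      have hsmem := hgrid i hiN
      have hpow : |t - (i:ℝ)*η| ^ α₀ ≤ η ^ α₀ :=
        Real.rpow_le_rpow (abs_nonneg _) habs hα₀.le
      have hb1 : ‖Xn n t ω - Xn n ((i:ℝ)*η) ω‖ ≤ Kn n ω * η ^ α₀ :=
        le_trans (hω1 ((i:ℝ)*η) hsmem t ht)
          (mul_le_mul_of_nonneg_left hpow (hKnpos n ω))
      have hb2 : ‖X ((i:ℝ)*η) ω - X t ω‖ ≤ K ω * η ^ α₀ := by
        rw [norm_sub_rev]
        exact le_trans (hω2 ((i:ℝ)*η) hsmem t ht)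
          (mul_le_mul_of_nonneg_left hpow (hKpos ω))
      have hGi : ‖Xn n ((i:ℝ)*η) ω - X ((i:ℝ)*η) ω‖ ≤ G n ω := by
        simp only [hGdef]
        exact Finset.le_sup' (fun j : ℕ => ‖Xn n ((j:ℝ)*η) ω - X ((j:ℝ)*η) ω‖)
          (show i ∈ Finset.range (N+1) from Finset.mem_range.2 (by omega))
      have tri : ‖Xn n t ω - X t ω‖
          ≤ ‖Xn n t ω - Xn n ((i:ℝ)*η) ω‖ + ‖Xn n ((i:ℝ)*η) ω - X ((i:ℝ)*η) ω‖
            + ‖X ((i:ℝ)*η) ω - X t ω‖ := by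
        simp only [← dist_eq_norm]
        exact dist_triangle4 _ _ _ _
      calc ‖Xn n t ω - X t ω‖ ≤ _ := tri
        _ ≤ Kn n ω * η ^ α₀ + G n ω + K ω * η ^ α₀ :=
            add_le_add (add_le_add hb1 hGi) hb2
        _ = (Kn n ω + K ω) * η ^ α₀ + G n ω := by ring
    · have : 0 ≤ (Kn n ω + K ω) * η ^ α₀ :=
        mul_nonneg (add_nonneg (hKnpos n ω) (hKpos ω)) (Real.rpow_nonneg hη0.le _)
      linarith
  -- main per-n measure estimate
  have hmain : ∀ n,
      P {ω | ε ≤ dist (⨆ t : Icc (0:ℝ) T, ‖Xn n t.1 ω - X t.1 ω‖) 0}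
        ≤ δ₂/2 + ∑ i ∈ Finset.range (N+1),
            P {ω | ε/2 ≤ dist (Xn n ((i:ℝ)*η) ω) (X ((i:ℝ)*η) ω)} := by
    intro n
    set B : Set Ω := {ω | ¬ ((⨆ t : Icc (0:ℝ) T, ‖Xn n t.1 ω - X t.1 ω‖)
        ≤ (Kn n ω + K ω) * η ^ α₀ + G n ω)} with hBdef
    have hB0 : P B = 0 := by
      have := hbound n
      rwa [ae_iff] at this
    have hsub : {ω | ε ≤ dist (⨆ t : Icc (0:ℝ) T, ‖Xn n t.1 ω - X t.1 ω‖) 0}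
        ⊆ B ∪ ({ω | c ≤ Kn n ω + K ω} ∪
          ⋃ i ∈ Finset.range (N+1),
            {ω | ε/2 ≤ dist (Xn n ((i:ℝ)*η) ω) (X ((i:ℝ)*η) ω)}) := by
      intro ω hω
      by_cases hb : (⨆ t : Icc (0:ℝ) T, ‖Xn n t.1 ω - X t.1 ω‖)
          ≤ (Kn n ω + K ω) * η ^ α₀ + G n ω
      · right
        by_cases hKc : c ≤ Kn n ω + K ω
        · left; exact hKc
        · right
          push_neg at hKc
          have hsup0 : 0 ≤ ⨆ t : Icc (0:ℝ) T, ‖Xn n t.1 ω - X t.1 ω‖ :=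
            Real.iSup_nonneg fun t => norm_nonneg _
          have hωε : ε ≤ ⨆ t : Icc (0:ℝ) T, ‖Xn n t.1 ω - X t.1 ω‖ := by
            have := hω
            rwa [mem_setOf_eq, Real.dist_eq, sub_zero, abs_of_nonneg hsup0] at this
          have hsmall : (Kn n ω + K ω) * η ^ α₀ < ε / 2 := by
            have h1 : (Kn n ω + K ω) * η ^ α₀ ≤ (Kn n ω + K ω) * h ^ α₀ :=
              mul_le_mul_of_nonneg_left
                (Real.rpow_le_rpow hη0.le hηh hα₀.le)
                (add_nonneg (hKnpos n ω) (hKpos ω))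
            have h2 : (Kn n ω + K ω) * h ^ α₀ < c * h ^ α₀ :=
              mul_lt_mul_of_pos_right hKc (Real.rpow_pos_of_pos hh0 _)
            have h3 : c * h ^ α₀ = ε / 2 := by
              rw [hhα]; field_simp
            calc (Kn n ω + K ω) * η ^ α₀ ≤ (Kn n ω + K ω) * h ^ α₀ := h1
              _ < c * h ^ α₀ := h2
              _ = ε / 2 := h3
          have hG : ε/2 ≤ G n ω := by linarith
          obtain ⟨i, hi, hieq⟩ := Finset.exists_mem_eq_sup' hne
            (fun i => ‖Xn n ((i:ℝ)*η) ω - X ((i:ℝ)*η) ω‖)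
          refine mem_biUnion hi ?_
          rw [mem_setOf_eq, dist_eq_norm]
          rw [hGdef] at hG
          simp only at hG
          rw [hieq] at hG
          exact hG
      · left; exact hb
    calc P {ω | ε ≤ dist (⨆ t : Icc (0:ℝ) T, ‖Xn n t.1 ω - X t.1 ω‖) 0}
        ≤ P (B ∪ ({ω | c ≤ Kn n ω + K ω} ∪
          ⋃ i ∈ Finset.range (N+1),
            {ω | ε/2 ≤ dist (Xn n ((i:ℝ)*η) ω) (X ((i:ℝ)*η) ω)})) := measure_mono hsub
      _ ≤ P B + P ({ω | c ≤ Kn n ω + K ω} ∪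
          ⋃ i ∈ Finset.range (N+1),
            {ω | ε/2 ≤ dist (Xn n ((i:ℝ)*η) ω) (X ((i:ℝ)*η) ω)}) := measure_union_le _ _
      _ ≤ P B + (P {ω | c ≤ Kn n ω + K ω} +
          P (⋃ i ∈ Finset.range (N+1),
            {ω | ε/2 ≤ dist (Xn n ((i:ℝ)*η) ω) (X ((i:ℝ)*η) ω)})) :=
          add_le_add_right (measure_union_le _ _) _
      _ ≤ 0 + (δ₂/2 + ∑ i ∈ Finset.range (N+1),
            P {ω | ε/2 ≤ dist (Xn n ((i:ℝ)*η) ω) (X ((i:ℝ)*η) ω)}) := by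
          rw [hB0]
          exact add_le_add_right (add_le_add (hMar n) (measure_biUnion_finset_le _ _)) _
      _ = δ₂/2 + ∑ i ∈ Finset.range (N+1),
            P {ω | ε/2 ≤ dist (Xn n ((i:ℝ)*η) ω) (X ((i:ℝ)*η) ω)} := by rw [zero_add]
  -- the grid sum tends to zero
  have hsum : Tendsto (fun n => ∑ i ∈ Finset.range (N+1),
      P {ω | ε/2 ≤ dist (Xn n ((i:ℝ)*η) ω) (X ((i:ℝ)*η) ω)}) atTop (𝓝 0) := by
    have h0 : (0:ℝ≥0∞) = ∑ _i ∈ Finset.range (N+1), (0:ℝ≥0∞) := by simp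
    rw [h0]
    refine tendsto_finset_sum _ fun i hi => ?_
    exact tendstoInMeasure_iff_dist.1 (hptwise ((i:ℝ)*η) (hgrid i (Nat.lt_succ_iff.1 (Finset.mem_range.1 hi))))
      (ε/2) (half_pos hε)
  have hev : ∀ᶠ n in atTop, (∑ i ∈ Finset.range (N+1),
      P {ω | ε/2 ≤ dist (Xn n ((i:ℝ)*η) ω) (X ((i:ℝ)*η) ω)}) < δ₂/2 :=
    hsum.eventually_lt_const hδ₂pos
  obtain ⟨N₀, hN₀⟩ := eventually_atTop.1 hev
  refine ⟨N₀, fun n hn => ?_⟩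
  calc P {ω | ε ≤ dist (⨆ t : Icc (0:ℝ) T, ‖Xn n t.1 ω - X t.1 ω‖) 0}
      ≤ δ₂/2 + ∑ i ∈ Finset.range (N+1),
          P {ω | ε/2 ≤ dist (Xn n ((i:ℝ)*η) ω) (X ((i:ℝ)*η) ω)} := hmain n
    _ ≤ δ₂/2 + δ₂/2 := add_le_add_right (hN₀ n hn).le _
    _ = δ₂ := ENNReal.add_halves δ₂
    _ ≤ δ := hδ₂le
end

section
/- Let D̄ be a bounded subset of ℝ^d and let Xⁿ (n ≥ 1) and X be continuous D̄-valued stochastic processes on [0,T]. Suppose that for every p ≥ 2 there are constants C₁(p), independent of n, and C₂(p) such that E[|Xⁿ(t) − Xⁿ(s)|^p] ≤ C₁(p)|t − s|^{p/2} for all n and E[|X(t) − X(s)|^p] ≤ C₂(p)|t − s|^{p/2}, for all s, t ∈ [0,T]. If lim_{n→∞} E[|Xⁿ(t) − X(t)|²] = 0 for every fixed t ∈ [0,T], then for every p > 0, lim_{n→∞} E[sup_{0≤t≤T} |Xⁿ(t) − X(t)|^p] = 0. -/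
open MeasureTheory Set Filter
open scoped ENNReal Topology

section Chain
variable {E : Type*} [NormedAddCommGroup E]

/-- dyadic approximation point at level j -/
noncomputable def dyad (T : ℝ) (j : ℕ) (x : ℝ) : ℝ := (⌊x * 2^j / T⌋₊ : ℝ) * T / 2^j

lemma dyad_mem {T : ℝ} (hT : 0 < T) {x : ℝ} (hx : x ∈ Icc 0 T) (j : ℕ) :
    dyad T j x ∈ Icc 0 T ∧ dyad T j x ≤ x ∧ x - dyad T j x < T / 2^j ∧
      ⌊x * 2^j / T⌋₊ ≤ 2^j := by
  obtain ⟨hx0, hxT⟩ := hx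
  have h2 : (0:ℝ) < 2^j := by positivity
  have hy0 : 0 ≤ x * 2^j / T := by positivity
  have hfl : (⌊x * 2^j / T⌋₊ : ℝ) ≤ x * 2^j / T := Nat.floor_le hy0
  have hfl2 : x * 2^j / T < (⌊x * 2^j / T⌋₊ : ℝ) + 1 := Nat.lt_floor_add_one _
  have hle : dyad T j x ≤ x := by
    rw [dyad, div_le_iff₀ h2]
    calc (⌊x * 2^j / T⌋₊ : ℝ) * T ≤ (x * 2^j / T) * T := by nlinarith
    _ = x * 2^j := by field_simp
  have hlt : x - dyad T j x < T / 2^j := by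
    rw [dyad, sub_lt_iff_lt_add, ← add_div, lt_div_iff₀ h2]
    calc x * 2^j = (x * 2^j / T) * T := by field_simp
    _ < ((⌊x * 2^j / T⌋₊ : ℝ) + 1) * T := by nlinarith
    _ = T + (⌊x * 2^j / T⌋₊:ℝ) * T := by ring
  have hub : ⌊x * 2^j / T⌋₊ ≤ 2^j := by
    have h : x * 2^j / T ≤ ((2^j : ℕ) : ℝ) := by
      push_cast; rw [div_le_iff₀ hT]; nlinarith
    exact Nat.floor_le_of_le h
  refine ⟨⟨by rw [dyad]; positivity, hle.trans hxT⟩, hle, hlt, hub⟩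

lemma dyad_step {T : ℝ} (hT : 0 < T) {x : ℝ} (hx : x ∈ Icc 0 T) (j : ℕ)
    (f : ℝ → E) {a : ℝ} (ha : 0 ≤ a)
    (hstep : ∀ i : ℕ, i < 2^(j+1) → ‖f ((i+1) * T / 2^(j+1)) - f (i * T / 2^(j+1))‖ ≤ a) :
    ‖f (dyad T (j+1) x) - f (dyad T j x)‖ ≤ a := by
  obtain ⟨hx0, hxT⟩ := hx
  set N := ⌊x * 2^j / T⌋₊ with hN
  set N' := ⌊x * 2^(j+1) / T⌋₊ with hN'
  have h2 : (0:ℝ) < 2^j := by positivity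
  have hy0 : 0 ≤ x * 2^j / T := by positivity
  have hy0' : 0 ≤ x * 2^(j+1) / T := by positivity
  have key : x * 2^(j+1) / T = 2 * (x * 2^j / T) := by ring
  have hfl : (N : ℝ) ≤ x * 2^j / T := Nat.floor_le hy0
  have hfl2 : x * 2^j / T < (N : ℝ) + 1 := Nat.lt_floor_add_one _
  have hlow : 2 * N ≤ N' := by
    rw [hN']; apply Nat.le_floor; push_cast; rw [key]; nlinarith
  have hhigh : N' < 2 * N + 2 := by
    have h1 : x * 2^(j+1) / T < ((2 * N + 2 : ℕ) : ℝ) := by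
      push_cast; rw [key]; nlinarith
    rw [hN']
    exact (Nat.floor_lt hy0').mpr (by push_cast at h1 ⊢; linarith)
  have heq : dyad T j x = (2 * N : ℕ) * T / 2^(j+1) := by
    rw [dyad, ← hN]; push_cast; field_simp; ring
  rcases (by omega : N' = 2 * N ∨ N' = 2 * N + 1) with h | h
  · have : dyad T (j+1) x = dyad T j x := by
      rw [dyad, ← hN', h, heq]
    rw [this]; simp only [sub_self, norm_zero]; exact ha
  · -- N' = 2N+1, need 2N < 2^(j+1), i.e. N < 2^j
    have hNub : N ≤ 2^j := (dyad_mem hT ⟨hx0, hxT⟩ j).2.2.2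
    have hNlt : N < 2^j := by
      rcases lt_or_eq_of_le hNub with h' | h'
      · exact h'
      · exfalso
        -- N = 2^j forces x = T, then N' = 2^(j+1) = 2N, contradiction
        have hxT' : T ≤ x := by
          have h2' : (2^j : ℝ) ≤ x * 2^j / T := by
            have := hfl; rw [h'] at this; push_cast at this; exact this
          rw [le_div_iff₀ hT] at h2'
          nlinarith
        have hxeq : x = T := le_antisymm hxT hxT'
        have : N' = 2^(j+1) := by
          rw [hN', hxeq]
          have : T * 2^(j+1) / T = ((2^(j+1) : ℕ) : ℝ) := by push_cast; field_simp
          rw [this, Nat.floor_natCast]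
        omega
    have hi : 2 * N < 2^(j+1) := by
      have : 2^(j+1) = 2 * 2^j := by ring
      omega
    have := hstep (2 * N) hi
    have heq' : dyad T (j+1) x = ((2 * N : ℕ) + 1 : ℝ) * T / 2^(j+1) := by
      rw [dyad, ← hN', h]; push_cast; ring
    rw [heq', heq]
    convert this using 4 <;> push_cast <;> ring
end Chain

section Chain2
variable {E : Type*} [NormedAddCommGroup E]

lemma approach {T : ℝ} (hT : 0 < T) (f : ℝ → E) (hf : ContinuousOn f (Icc 0 T))
    (a : ℕ → ℝ) (ha0 : ∀ j, 0 ≤ a j) (hsum : Summable a) (m : ℕ)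
    (hstep : ∀ j, m ≤ j → ∀ i : ℕ, i < 2^j → ‖f ((i+1) * T / 2^j) - f (i * T / 2^j)‖ ≤ a j)
    {x : ℝ} (hx : x ∈ Icc 0 T) :
    ‖f x - f (dyad T m x)‖ ≤ ∑' j, a (j + (m+1)) := by
  set u : ℕ → ℝ := fun J => dyad T (m+J) x with hu
  have hsum' : Summable (fun j => a (j + (m+1))) := (summable_nat_add_iff (m+1)).mpr hsum
  have claim1 : ∀ J, ‖f (u J) - f (u 0)‖ ≤ ∑ k ∈ Finset.range J, a (k + (m+1)) := by
    intro J
    induction J with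
    | zero => simp
    | succ J ih =>
      have hstep' : ‖f (u (J+1)) - f (u J)‖ ≤ a (J + (m+1)) := by
        have hidx : J + (m+1) = (m+J)+1 := by omega
        rw [hidx]
        exact dyad_step hT hx (m+J) f (ha0 _) (fun i hi => hstep (m+J+1) (by omega) i hi)
      calc ‖f (u (J+1)) - f (u 0)‖ ≤ ‖f (u (J+1)) - f (u J)‖ + ‖f (u J) - f (u 0)‖ :=
            norm_sub_le_norm_sub_add_norm_sub _ _ _
      _ ≤ a (J + (m+1)) + ∑ k ∈ Finset.range J, a (k + (m+1)) := add_le_add hstep' ih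
      _ = ∑ k ∈ Finset.range (J+1), a (k + (m+1)) := by rw [Finset.sum_range_succ]; ring
  have hulim : Tendsto u atTop (𝓝 x) := by
    have hup : Tendsto (fun J => T / 2^(m+J)) atTop (𝓝 0) := by
      have : (fun J : ℕ => T / 2^(m+J)) = fun J => (T / 2^m) * (1/2)^J := by
        funext J; rw [pow_add]; field_simp; rw [← mul_pow]; norm_num
      rw [this]
      simpa using (tendsto_pow_atTop_nhds_zero_of_lt_one (by norm_num : (0:ℝ) ≤ 1/2)
        (by norm_num : (1:ℝ)/2 < 1)).const_mul (T / 2^m)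
    have hsq : Tendsto (fun J => x - u J) atTop (𝓝 0) := by
      apply squeeze_zero (fun J => by
          have := (dyad_mem hT hx (m+J)).2.1; simpa [hu] using sub_nonneg.mpr this)
        (fun J => le_of_lt (dyad_mem hT hx (m+J)).2.2.1) hup
    have h2 : Tendsto (fun J => x - (x - u J)) atTop (𝓝 (x - 0)) :=
      tendsto_const_nhds.sub hsq
    simpa using h2
  have hmem : ∀ J, u J ∈ Icc 0 T := fun J => (dyad_mem hT hx (m+J)).1
  have hflim : Tendsto (fun J => f (u J)) atTop (𝓝 (f x)) :=
    (hf x hx).tendsto.comp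
      (tendsto_nhdsWithin_of_tendsto_nhds_of_eventually_within _ hulim
        (Eventually.of_forall hmem))
  have : Tendsto (fun J => ‖f (u J) - f (u 0)‖) atTop (𝓝 ‖f x - f (u 0)‖) :=
    (hflim.sub tendsto_const_nhds).norm
  have hle : ‖f x - f (u 0)‖ ≤ ∑' j, a (j + (m+1)) :=
    le_of_tendsto this (Eventually.of_forall fun J =>
      (claim1 J).trans (Summable.sum_le_tsum (Finset.range J) (fun i _ => ha0 _) hsum'))
  simpa [hu] using hle

lemma chain_le {T : ℝ} (hT : 0 < T) (f : ℝ → E) (hf : ContinuousOn f (Icc 0 T))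
    (a : ℕ → ℝ) (ha0 : ∀ j, 0 ≤ a j) (hsum : Summable a) (m : ℕ)
    (hstep : ∀ j, m ≤ j → ∀ i : ℕ, i < 2^j → ‖f ((i+1) * T / 2^j) - f (i * T / 2^j)‖ ≤ a j) :
    ∀ s ∈ Icc (0:ℝ) T, ∀ t ∈ Icc (0:ℝ) T, |t - s| ≤ T / 2^m →
      ‖f t - f s‖ ≤ 2 * ∑' j, a (j + m) := by
  have hsum' : Summable (fun j => a (j + (m+1))) := (summable_nat_add_iff (m+1)).mpr hsum
  have htsum : ∑' j, a (j + m) = a m + ∑' j, a (j + (m+1)) := by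
    have h0 : Summable (fun j => a (j + m)) := (summable_nat_add_iff m).mpr hsum
    rw [Summable.tsum_eq_zero_add h0]
    congr 1
    · simp
    · exact tsum_congr fun j => by congr 1; omega
  have key : ∀ s ∈ Icc (0:ℝ) T, ∀ t ∈ Icc (0:ℝ) T, s ≤ t → t - s ≤ T / 2^m →
      ‖f t - f s‖ ≤ 2 * ∑' j, a (j + m) := by
    intro s hs t ht hst hd
    have has := approach hT f hf a ha0 hsum m hstep hs
    have hat := approach hT f hf a ha0 hsum m hstep ht
    have hmid : ‖f (dyad T m t) - f (dyad T m s)‖ ≤ a m := by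
      set Ns := ⌊s * 2^m / T⌋₊ with hNs
      set Nt := ⌊t * 2^m / T⌋₊ with hNt
      have hys : 0 ≤ s * 2^m / T := by
        have := hs.1; positivity
      have hmono : Ns ≤ Nt := Nat.floor_le_floor (by
        have h2 : (0:ℝ) < 2^m := by positivity
        have := hs.1
        gcongr)
      have hub : Nt ≤ Ns + 1 := by
        have h1 : t * 2^m / T ≤ s * 2^m / T + 1 := by
          have h2 : (0:ℝ) < 2^m := by positivity
          rw [div_add' _ _ _ (ne_of_gt hT), div_le_div_iff₀ hT hT]
          have : (t - s) * 2^m ≤ T := by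
            rw [← le_div_iff₀ h2]; exact hd
          nlinarith
        calc Nt ≤ ⌊s * 2^m / T + 1⌋₊ := Nat.floor_le_floor h1
        _ = Ns + 1 := by rw [Nat.floor_add_one hys]
      rcases (by omega : Nt = Ns ∨ Nt = Ns + 1) with h | h
      · have : dyad T m t = dyad T m s := by rw [dyad, dyad, ← hNs, ← hNt, h]
        rw [this]; simp only [sub_self, norm_zero]; exact ha0 m
      · have hNtub : Nt ≤ 2^m := (dyad_mem hT ht m).2.2.2
        have hNslt : Ns < 2^m := by omega
        have := hstep m le_rfl Ns hNslt
        have e1 : dyad T m t = ((Ns:ℝ) + 1) * T / 2^m := by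
          rw [dyad, ← hNt, h]; push_cast; ring
        have e2 : dyad T m s = (Ns:ℝ) * T / 2^m := by rw [dyad, ← hNs]
        rw [e1, e2]; exact this
    calc ‖f t - f s‖ ≤ ‖f t - f (dyad T m t)‖ + ‖f (dyad T m t) - f s‖ :=
          norm_sub_le_norm_sub_add_norm_sub _ _ _
    _ ≤ ‖f t - f (dyad T m t)‖ + (‖f (dyad T m t) - f (dyad T m s)‖ + ‖f (dyad T m s) - f s‖) :=
          by gcongr; exact norm_sub_le_norm_sub_add_norm_sub _ _ _
    _ ≤ (∑' j, a (j + (m+1))) + (a m + (∑' j, a (j + (m+1)))) := by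
          exact add_le_add hat (add_le_add hmid (by rw [norm_sub_rev]; exact has))
    _ ≤ 2 * ∑' j, a (j + m) := by rw [htsum]; have := ha0 m; linarith
  intro s hs t ht hd
  rcases le_total s t with h | h
  · exact key s hs t ht h (by rwa [abs_of_nonneg (by linarith)] at hd)
  · rw [norm_sub_rev]
    exact key t ht s hs h (by rw [abs_sub_comm, abs_of_nonneg (by linarith)] at hd; exact hd)

end Chain2

section Prob
open MeasureTheory
open scoped ENNReal

variable {Ω : Type*} {m0 : MeasurableSpace Ω}

lemma markov_single (P : Measure Ω) [IsProbabilityMeasure P]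
    {d : ℕ} (Z W : Ω → EuclideanSpace ℝ (Fin d))
    (hZ : Measurable Z) (hW : Measurable W) {b : ℝ} (hb : 0 < b) {p : ℝ} (hp : 0 < p) :
    P {ω | b < ‖Z ω - W ω‖} ≤
      (∫⁻ ω, ENNReal.ofReal (‖Z ω - W ω‖ ^ p) ∂P) / ENNReal.ofReal (b ^ p) := by
  have hmeas : Measurable fun ω => ENNReal.ofReal (‖Z ω - W ω‖ ^ p) :=
    ((hZ.sub hW).norm.pow_const p).ennreal_ofReal
  have hsub : {ω | b < ‖Z ω - W ω‖} ⊆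
      {ω | ENNReal.ofReal (b ^ p) ≤ ENNReal.ofReal (‖Z ω - W ω‖ ^ p)} := by
    intro ω hω
    exact ENNReal.ofReal_le_ofReal (Real.rpow_le_rpow hb.le (le_of_lt hω) hp.le)
  refine (measure_mono hsub).trans ?_
  exact meas_ge_le_lintegral_div hmeas.aemeasurable
    (by simp [ENNReal.ofReal_eq_zero, not_le, Real.rpow_pos_of_pos hb p])
    ENNReal.ofReal_ne_top

lemma badset (P : Measure Ω) [IsProbabilityMeasure P]
    {d : ℕ} {T : ℝ} (hT : 0 < T) (Z : ℝ → Ω → EuclideanSpace ℝ (Fin d))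
    (hZmeas : ∀ t, Measurable (Z t))
    (hZcont : ∀ ω, ContinuousOn (fun t => Z t ω) (Icc 0 T)) (C : ℝ)
    (hmom : ∀ s ∈ Icc (0:ℝ) T, ∀ t ∈ Icc (0:ℝ) T,
      (∫⁻ ω, ENNReal.ofReal (‖Z t ω - Z s ω‖ ^ (16:ℝ)) ∂P)
        ≤ ENNReal.ofReal (C * |t - s| ^ ((16:ℝ)/2)))
    (m : ℕ) :
    ∃ A : Set Ω, MeasurableSet A ∧
      P A ≤ ∑' j : ℕ, ENNReal.ofReal
        ((max C 0 * T^(8:ℕ)) * ((2^25/3^16 : ℝ))^(j+m)) ∧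
      ∀ ω ∉ A, ∀ s ∈ Icc (0:ℝ) T, ∀ t ∈ Icc (0:ℝ) T, |t - s| ≤ T / 2^m →
        ‖Z t ω - Z s ω‖ ≤ 8 * (3/4:ℝ)^m := by
  classical
  set grid : ℕ → ℕ → ℝ := fun k i => (i : ℝ) * T / 2^k with hgrid
  have hgridmem : ∀ k : ℕ, ∀ i : ℕ, i ≤ 2^k → grid k i ∈ Icc (0:ℝ) T := by
    intro k i hi
    constructor
    · have : (0:ℝ) ≤ (i:ℝ) * T / 2^k := by positivity
      simpa [hgrid] using this
    · rw [hgrid]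
      have h2 : (0:ℝ) < 2^k := by positivity
      rw [div_le_iff₀ h2]
      have : (i : ℝ) ≤ 2^k := by exact_mod_cast hi
      nlinarith
  set A : Set Ω := ⋃ (j : ℕ), ⋃ i ∈ Finset.range (2^(j+m)),
    {ω | (3/4:ℝ)^(j+m) < ‖Z (grid (j+m) (i+1)) ω - Z (grid (j+m) i) ω‖} with hA
  have hAmeas : MeasurableSet A := by
    refine MeasurableSet.iUnion fun j => MeasurableSet.iUnion fun i =>
      MeasurableSet.iUnion fun _ => ?_
    exact measurableSet_lt measurable_const
      (((hZmeas _).sub (hZmeas _)).norm)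
  refine ⟨A, hAmeas, ?_, ?_⟩
  · -- measure bound
    refine (measure_iUnion_le _).trans ?_
    refine ENNReal.tsum_le_tsum fun j => ?_
    set k := j + m with hk
    refine (measure_biUnion_finset_le _ _).trans ?_
    have hper : ∀ i ∈ Finset.range (2^k),
        P {ω | (3/4:ℝ)^k < ‖Z (grid k (i+1)) ω - Z (grid k i) ω‖}
          ≤ ENNReal.ofReal ((max C 0 * T^(8:ℕ)) * ((2^24/3^16 : ℝ))^k) := by
      intro i hi
      rw [Finset.mem_range] at hi
      have hb : (0:ℝ) < (3/4:ℝ)^k := by positivity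
      have h1 := markov_single P (Z (grid k (i+1))) (Z (grid k i))
        (hZmeas _) (hZmeas _) hb (by norm_num : (0:ℝ) < 16)
      have h2 := hmom (grid k i) (hgridmem k i hi.le) (grid k (i+1)) (hgridmem k (i+1) hi)
      have hdiff : |grid k (i+1) - grid k i| = T / 2^k := by
        have e : grid k (i+1) - grid k i = T / 2^k := by
          simp only [hgrid]; push_cast; ring
        rw [e, abs_of_pos (by positivity)]
      rw [hdiff] at h2
      refine h1.trans ?_
      refine (ENNReal.div_le_div_right h2 _).trans ?_
      rw [ENNReal.div_le_iff (by simp [ENNReal.ofReal_eq_zero, not_le, Real.rpow_pos_of_pos hb]; positivity) ENNReal.ofReal_ne_top]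
      rw [← ENNReal.ofReal_mul (by positivity)]
      apply ENNReal.ofReal_le_ofReal
      have e1 : ((3/4:ℝ)^k) ^ (16:ℝ) = ((3/4:ℝ)^(16:ℕ))^k := by
        rw [show ((16:ℝ)) = ((16:ℕ):ℝ) by norm_num, Real.rpow_natCast, pow_right_comm]
      have e2 : (T / 2^k) ^ ((16:ℝ)/2) = T^(8:ℕ) * ((1/2^(8:ℕ) : ℝ))^k := by
        rw [show ((16:ℝ)/2) = ((8:ℕ):ℝ) by norm_num, Real.rpow_natCast,
          div_pow, pow_right_comm]
        rw [div_pow, one_pow]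
        field_simp
      rw [e1, e2]
      have e3 : ((2^24/3^16 : ℝ))^k * ((3/4:ℝ)^(16:ℕ))^k = ((1/2^(8:ℕ) : ℝ))^k := by
        rw [← mul_pow]; norm_num
      calc C * (T^(8:ℕ) * ((1/2^(8:ℕ) : ℝ))^k)
          ≤ max C 0 * (T^(8:ℕ) * ((1/2^(8:ℕ) : ℝ))^k) := by
            apply mul_le_mul_of_nonneg_right (le_max_left _ _); positivity
        _ = max C 0 * T^(8:ℕ) * ((2^24/3^16 : ℝ))^k * ((3/4:ℝ)^(16:ℕ))^k := by
            rw [mul_assoc, mul_assoc, e3]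
    refine (Finset.sum_le_card_nsmul _ _ _ hper).trans ?_
    rw [Finset.card_range, nsmul_eq_mul]
    have : ((2^k : ℕ) : ℝ≥0∞) = ENNReal.ofReal ((2:ℝ)^k) := by
      rw [← ENNReal.ofReal_natCast]; congr 1; push_cast; ring
    rw [this, ← ENNReal.ofReal_mul (by positivity)]
    apply ENNReal.ofReal_le_ofReal
    have : (2:ℝ)^k * (max C 0 * T^(8:ℕ) * ((2^24/3^16 : ℝ))^k)
        = max C 0 * T^(8:ℕ) * ((2:ℝ)^k * ((2^24/3^16 : ℝ))^k) := by ring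
    rw [this, ← mul_pow]
    apply le_of_eq
    congr 2
    norm_num
  · -- complement modulus bound
    intro ω hω s hs t ht hd
    have hnot : ∀ j : ℕ, m ≤ j → ∀ i : ℕ, i < 2^j →
        ‖Z (grid j (i+1)) ω - Z (grid j i) ω‖ ≤ (3/4:ℝ)^j := by
      intro j hj i hi
      by_contra hcon
      push_neg at hcon
      apply hω
      rw [hA]
      refine mem_iUnion.mpr ⟨j - m, ?_⟩
      have hjm : j - m + m = j := by omega
      rw [hjm]
      exact mem_iUnion.mpr ⟨i, mem_iUnion.mpr ⟨Finset.mem_range.mpr hi, hcon⟩⟩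
    have := chain_le hT (fun t => Z t ω) (hZcont ω) (fun j => (3/4:ℝ)^j)
      (fun j => by positivity)
      (summable_geometric_of_lt_one (by norm_num) (by norm_num)) m
      (fun j hj i hi => by
        have := hnot j hj i hi
        simpa [hgrid, add_comm] using this)
      s hs t ht hd
    refine this.trans ?_
    have htsum : ∑' j : ℕ, (3/4:ℝ)^(j+m) = (3/4:ℝ)^m * 4 := by
      have : ∀ j : ℕ, (3/4:ℝ)^(j+m) = (3/4:ℝ)^j * (3/4:ℝ)^m := fun j => pow_add _ _ _
      rw [tsum_congr this, tsum_mul_right,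
        tsum_geometric_of_lt_one (by norm_num) (by norm_num)]
      norm_num; ring
    rw [htsum]; ring_nf; norm_num
end Prob


open MeasureTheory Set Filter
open scoped ENNReal Topology



/-- Let `D̄` be a bounded subset of `ℝ^d` and let `Xⁿ` and `X` be
continuous `D̄`-valued processes on `[0, T]`.  Suppose for every `p ≥ 2` there are
constants `C₁(p)` (independent of `n`) and `C₂(p)` such that
`E[|Xⁿ(t) − Xⁿ(s)|^p] ≤ C₁(p) |t − s|^{p/2}` for all `n`, and
`E[|X(t) − X(s)|^p] ≤ C₂(p) |t − s|^{p/2}`, for all `s, t ∈ [0, T]`.  If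
`lim_n E[|Xⁿ(t) − X(t)|²] = 0` for every fixed `t ∈ [0, T]`, then for every `p > 0`,
`lim_n E[sup_{0 ≤ t ≤ T} |Xⁿ(t) − X(t)|^p] = 0`. -/
theorem strong_convergence_from_moment_bounds_and_L2
    {Ω : Type*} {m0 : MeasurableSpace Ω} (P : Measure Ω) [IsProbabilityMeasure P]
    {d : ℕ} (T : ℝ) (hT : 0 < T)
    (Dbar : Set (EuclideanSpace ℝ (Fin d))) (hDbar : Bornology.IsBounded Dbar)
    (Xn : ℕ → ℝ → Ω → EuclideanSpace ℝ (Fin d))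
    (X : ℝ → Ω → EuclideanSpace ℝ (Fin d))
    (hXnmeas : ∀ n t, Measurable (Xn n t)) (hXmeas : ∀ t, Measurable (X t))
    (hXncont : ∀ n ω, ContinuousOn (fun t => Xn n t ω) (Icc 0 T))
    (hXcont : ∀ ω, ContinuousOn (fun t => X t ω) (Icc 0 T))
    (hXnmem : ∀ n ω, ∀ t ∈ Icc (0 : ℝ) T, Xn n t ω ∈ Dbar)
    (hXmem : ∀ ω, ∀ t ∈ Icc (0 : ℝ) T, X t ω ∈ Dbar)
    (hmomn : ∀ p : ℝ, 2 ≤ p → ∃ C₁ : ℝ, ∀ n : ℕ,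
      ∀ s ∈ Icc (0 : ℝ) T, ∀ t ∈ Icc (0 : ℝ) T,
        (∫⁻ ω, ENNReal.ofReal (‖Xn n t ω - Xn n s ω‖ ^ p) ∂P)
          ≤ ENNReal.ofReal (C₁ * |t - s| ^ (p / 2)))
    (hmom : ∀ p : ℝ, 2 ≤ p → ∃ C₂ : ℝ,
      ∀ s ∈ Icc (0 : ℝ) T, ∀ t ∈ Icc (0 : ℝ) T,
        (∫⁻ ω, ENNReal.ofReal (‖X t ω - X s ω‖ ^ p) ∂P)
          ≤ ENNReal.ofReal (C₂ * |t - s| ^ (p / 2)))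
    (hL2 : ∀ t ∈ Icc (0 : ℝ) T,
      Tendsto (fun n => ∫⁻ ω, ENNReal.ofReal (‖Xn n t ω - X t ω‖ ^ 2) ∂P)
        atTop (𝓝 0)) :
    ∀ p : ℝ, 0 < p →
      Tendsto (fun n => ∫⁻ ω,
          ENNReal.ofReal ((⨆ t : Icc (0 : ℝ) T, ‖Xn n t.1 ω - X t.1 ω‖) ^ p) ∂P)
        atTop (𝓝 0) := by
  classical
  intro p hp
  haveI : Nonempty (Icc (0:ℝ) T) := ⟨⟨0, le_refl 0, hT.le⟩⟩
  obtain ⟨C₁, hC₁⟩ := hmomn 16 (by norm_num)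
  obtain ⟨C₂, hC₂⟩ := hmom 16 (by norm_num)
  obtain ⟨M, hM⟩ := hDbar.subset_closedBall 0
  set R : ℝ := max M 0 with hR
  set B : ℝ := 2 * R + 1 with hB
  have hB0 : 0 < B := by
    have : 0 ≤ R := le_max_right _ _
    rw [hB]; linarith
  -- pointwise bound on the difference process
  have hYb : ∀ n ω, ∀ t ∈ Icc (0:ℝ) T, ‖Xn n t ω - X t ω‖ ≤ B := by
    intro n ω t ht
    have h1 : ‖Xn n t ω‖ ≤ R := by
      have := hM (hXnmem n ω t ht)
      simp only [Metric.mem_closedBall, dist_zero_right] at this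
      exact this.trans (le_max_left _ _)
    have h2 : ‖X t ω‖ ≤ R := by
      have := hM (hXmem ω t ht)
      simp only [Metric.mem_closedBall, dist_zero_right] at this
      exact this.trans (le_max_left _ _)
    calc ‖Xn n t ω - X t ω‖ ≤ ‖Xn n t ω‖ + ‖X t ω‖ := norm_sub_le _ _
    _ ≤ B := by rw [hB]; linarith
  set S : ℕ → Ω → ℝ := fun n ω => ⨆ t : Icc (0:ℝ) T, ‖Xn n t.1 ω - X t.1 ω‖ with hS
  have hSbdd : ∀ n ω, BddAbove (range fun t : Icc (0:ℝ) T => ‖Xn n t.1 ω - X t.1 ω‖) :=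
    fun n ω => ⟨B, by rintro x ⟨t, rfl⟩; exact hYb n ω t.1 t.2⟩
  have hSle : ∀ n ω (c : ℝ), (∀ t : Icc (0:ℝ) T, ‖Xn n t.1 ω - X t.1 ω‖ ≤ c) → S n ω ≤ c :=
    fun n ω c h => ciSup_le h
  have hSB : ∀ n ω, S n ω ≤ B := fun n ω => hSle n ω B fun t => hYb n ω t.1 t.2
  have hS0 : ∀ n ω, 0 ≤ S n ω := fun n ω =>
    (norm_nonneg _).trans (le_ciSup (hSbdd n ω) ⟨0, le_refl 0, hT.le⟩)
  rw [ENNReal.tendsto_atTop_zero]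
  intro ε hε
  -- choose θ with ofReal (θ^p) ≤ ε / 2
  obtain ⟨k0, hk0⟩ : ∃ k0 : ℕ, ENNReal.ofReal (((1/2:ℝ)^k0) ^ p) < ε / 2 := by
    have h1 : Tendsto (fun k : ℕ => (((1/2:ℝ)^p)^k)) atTop (𝓝 0) :=
      tendsto_pow_atTop_nhds_zero_of_lt_one
        (Real.rpow_nonneg (by norm_num) p)
        (Real.rpow_lt_one (by norm_num) (by norm_num) hp)
    have h2 : Tendsto (fun k : ℕ => ENNReal.ofReal (((1/2:ℝ)^k) ^ p)) atTop (𝓝 0) := by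
      have he : ∀ k : ℕ, ((1/2:ℝ)^k) ^ p = ((1/2:ℝ)^p)^k := fun k => by
        rw [← Real.rpow_natCast (1/2:ℝ) k, ← Real.rpow_natCast ((1/2:ℝ)^p) k,
          ← Real.rpow_mul (by norm_num), ← Real.rpow_mul (by norm_num), mul_comm]
      simp only [he]
      simpa [Function.comp_def] using (ENNReal.continuous_ofReal.tendsto 0).comp h1
    exact (h2.eventually_lt_const (ENNReal.div_pos hε.ne' ENNReal.ofNat_ne_top)).exists
  set θ : ℝ := (1/2:ℝ)^k0 with hθdef
  have hθ : 0 < θ := by positivity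
  have hθε : ENNReal.ofReal (θ ^ p) ≤ ε / 2 := hk0.le
  -- tail series
  set q : ℝ := 2^25/3^16 with hq
  have hq0 : (0:ℝ) ≤ q := by rw [hq]; norm_num
  have hq1 : q < 1 := by rw [hq]; norm_num
  set D₁ : ℝ := max C₁ 0 * T^(8:ℕ) with hD₁
  set D₂ : ℝ := max C₂ 0 * T^(8:ℕ) with hD₂
  have hD₁0 : 0 ≤ D₁ := by rw [hD₁]; positivity
  have hD₂0 : 0 ≤ D₂ := by rw [hD₂]; positivity
  set f₁ : ℕ → ℝ≥0∞ := fun j => ENNReal.ofReal (D₁ * q^j) with hf₁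
  set f₂ : ℕ → ℝ≥0∞ := fun j => ENNReal.ofReal (D₂ * q^j) with hf₂
  have htail : ∀ (D : ℝ), 0 ≤ D → (∑' j : ℕ, ENNReal.ofReal (D * q^j)) ≠ ⊤ := by
    intro D hD
    rw [← ENNReal.ofReal_tsum_of_nonneg (fun j => by positivity)
      ((summable_geometric_of_lt_one hq0 hq1).mul_left D)]
    exact ENNReal.ofReal_ne_top
  have htail₁ : Tendsto (fun m => ∑' j : ℕ, f₁ (j + m)) atTop (𝓝 0) :=
    ENNReal.tendsto_sum_nat_add f₁ (htail D₁ hD₁0)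
  have htail₂ : Tendsto (fun m => ∑' j : ℕ, f₂ (j + m)) atTop (𝓝 0) :=
    ENNReal.tendsto_sum_nat_add f₂ (htail D₂ hD₂0)
  set BP : ℝ≥0∞ := ENNReal.ofReal (B ^ p) with hBP
  have hBPtop : BP ≠ ⊤ := ENNReal.ofReal_ne_top
  have hhalf : (0:ℝ≥0∞) < ε / 2 :=
    ENNReal.div_pos hε.ne' ENNReal.ofNat_ne_top
  have hquarter : (0:ℝ≥0∞) < ε / 2 / 2 :=
    ENNReal.div_pos hhalf.ne' ENNReal.ofNat_ne_top
  -- choose m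
  have hmev1 : ∀ᶠ m : ℕ in atTop,
      BP * (∑' j : ℕ, f₁ (j + m)) + BP * (∑' j : ℕ, f₂ (j + m)) < ε / 2 / 2 := by
    have h1 := ENNReal.Tendsto.const_mul htail₁ (Or.inr hBPtop)
    have h2 := ENNReal.Tendsto.const_mul htail₂ (Or.inr hBPtop)
    have h3 := h1.add h2
    simp only [mul_zero, add_zero] at h3
    exact h3.eventually_lt_const hquarter
  have hmev2 : ∀ᶠ m : ℕ in atTop, (3/4:ℝ)^m < θ/32 :=
    (tendsto_pow_atTop_nhds_zero_of_lt_one (by norm_num) (by norm_num)).eventually_lt_const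
      (by positivity)
  obtain ⟨m, hm1, hm2⟩ := (hmev1.and hmev2).exists
  -- grid events at level m
  set gp : ℕ → ℝ := fun i => (i:ℝ) * T / 2^m with hgp
  have hgpmem : ∀ i : ℕ, i ≤ 2^m → gp i ∈ Icc (0:ℝ) T := by
    intro i hi
    constructor
    · have : (0:ℝ) ≤ (i:ℝ) * T / 2^m := by positivity
      simpa [hgp] using this
    · simp only [hgp]
      have h2 : (0:ℝ) < 2^m := by positivity
      rw [div_le_iff₀ h2]
      have : (i : ℝ) ≤ 2^m := by exact_mod_cast hi
      nlinarith
  set ε₁ : ℝ := θ / 2 with hε₁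
  have hε₁0 : 0 < ε₁ := by rw [hε₁]; positivity
  set Ev : ℕ → ℕ → Set Ω := fun n i => {ω | ε₁ < ‖Xn n (gp i) ω - X (gp i) ω‖} with hEv
  have hEvmeas : ∀ n i, MeasurableSet (Ev n i) := fun n i =>
    measurableSet_lt measurable_const ((hXnmeas n _).sub (hXmeas _)).norm
  set G : ℕ → ℝ≥0∞ := fun n => ∑ i ∈ Finset.range (2^m+1), P (Ev n i) with hG
  have hone : ENNReal.ofReal (ε₁^2) ≠ 0 := by
    simp only [ne_eq, ENNReal.ofReal_eq_zero, not_le]; positivity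
  have hGlim : Tendsto G atTop (𝓝 0) := by
    have h0 : ∀ i ∈ Finset.range (2^m+1), Tendsto (fun n => P (Ev n i)) atTop (𝓝 0) := by
      intro i hi
      rw [Finset.mem_range] at hi
      have hti : gp i ∈ Icc (0:ℝ) T := hgpmem i (by omega)
      have hup : Tendsto (fun n =>
          (∫⁻ ω, ENNReal.ofReal (‖Xn n (gp i) ω - X (gp i) ω‖ ^ 2) ∂P)
            * (ENNReal.ofReal (ε₁^2))⁻¹) atTop (𝓝 0) := by
        have h := ENNReal.Tendsto.mul_const (hL2 (gp i) hti)
          (Or.inr (ENNReal.inv_ne_top.mpr hone))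
        simpa using h
      refine tendsto_of_tendsto_of_tendsto_of_le_of_le tendsto_const_nhds hup
        (fun n => zero_le) (fun n => ?_)
      have hsub : Ev n i ⊆ {ω | ENNReal.ofReal (ε₁^2)
          ≤ ENNReal.ofReal (‖Xn n (gp i) ω - X (gp i) ω‖^2)} := by
        intro ω hω
        exact ENNReal.ofReal_le_ofReal (pow_le_pow_left₀ hε₁0.le (le_of_lt hω) 2)
      refine (measure_mono hsub).trans ?_
      have h := meas_ge_le_lintegral_div (μ := P)
        (f := fun ω => ENNReal.ofReal (‖Xn n (gp i) ω - X (gp i) ω‖^2))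
        ((((hXnmeas n _).sub (hXmeas _)).norm.pow_const 2).ennreal_ofReal).aemeasurable
        hone ENNReal.ofReal_ne_top
      rw [div_eq_mul_inv] at h
      exact h
    have := tendsto_finset_sum (Finset.range (2^m+1)) h0
    simpa [hG] using this
  have hNev : ∀ᶠ n in atTop, BP * G n < ε / 2 / 2 := by
    have h := ENNReal.Tendsto.const_mul hGlim (Or.inr hBPtop)
    simp only [mul_zero] at h
    exact h.eventually_lt_const hquarter
  obtain ⟨N, hN⟩ := eventually_atTop.mp hNev
  refine ⟨N, fun n hn => ?_⟩
  -- bad sets from the moment bounds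
  obtain ⟨A₁, hA₁m, hA₁P, hA₁mod⟩ := badset P hT (Xn n) (hXnmeas n) (hXncont n) C₁ (hC₁ n) m
  obtain ⟨A₂, hA₂m, hA₂P, hA₂mod⟩ := badset P hT X hXmeas hXcont C₂ hC₂ m
  have hA₁P' : P A₁ ≤ ∑' j : ℕ, f₁ (j + m) := hA₁P
  have hA₂P' : P A₂ ≤ ∑' j : ℕ, f₂ (j + m) := hA₂P
  set Bad : Set Ω := (A₁ ∪ A₂) ∪ ⋃ i ∈ Finset.range (2^m+1), Ev n i with hBad
  have hBadmeas : MeasurableSet Bad :=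
    (hA₁m.union hA₂m).union ((Finset.range (2^m+1)).measurableSet_biUnion
      (fun i _ => hEvmeas n i))
  have hPBad : P Bad ≤ ((∑' j : ℕ, f₁ (j + m)) + (∑' j : ℕ, f₂ (j + m))) + G n := by
    refine (measure_union_le _ _).trans (add_le_add ?_ ?_)
    · exact (measure_union_le _ _).trans (add_le_add hA₁P' hA₂P')
    · exact measure_biUnion_finset_le _ _
  -- pointwise bound
  have hpt : ∀ ω, ENNReal.ofReal ((S n ω)^p)
      ≤ ENNReal.ofReal (θ^p) + Bad.indicator (fun _ => BP) ω := by
    intro ω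
    by_cases hω : ω ∈ Bad
    · rw [indicator_of_mem hω]
      refine le_trans ?_ le_add_self
      exact ENNReal.ofReal_le_ofReal (Real.rpow_le_rpow (hS0 n ω) (hSB n ω) hp.le)
    · rw [indicator_of_notMem hω, add_zero]
      have hω₁ : ω ∉ A₁ := fun h => hω (Or.inl (Or.inl h))
      have hω₂ : ω ∉ A₂ := fun h => hω (Or.inl (Or.inr h))
      have hωE : ∀ i, i ≤ 2^m → ω ∉ Ev n i := fun i hi h =>
        hω (Or.inr (mem_biUnion (Finset.mem_range.mpr (by omega)) h))
      have hStheta : S n ω ≤ θ := by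
        apply hSle
        intro t
        set i : ℕ := ⌊t.1 * 2^m / T⌋₊ with hidef
        obtain ⟨humem, hule, hult, hub⟩ := dyad_mem hT t.2 m
        have hueq : dyad T m t.1 = gp i := by rw [dyad, hgp]
        rw [hueq] at humem hule hult
        have habs : |t.1 - gp i| ≤ T / 2^m := by
          rw [abs_of_nonneg (by linarith)]; exact hult.le
        have h1 : ‖Xn n t.1 ω - Xn n (gp i) ω‖ ≤ 8*(3/4:ℝ)^m :=
          hA₁mod ω hω₁ (gp i) humem t.1 t.2 habs
        have h2 : ‖X t.1 ω - X (gp i) ω‖ ≤ 8*(3/4:ℝ)^m :=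
          hA₂mod ω hω₂ (gp i) humem t.1 t.2 habs
        have h3 : ‖Xn n (gp i) ω - X (gp i) ω‖ ≤ ε₁ := by
          have := hωE i hub
          rw [hEv] at this
          simp only [mem_setOf_eq, not_lt] at this
          exact this
        have htri : ‖Xn n t.1 ω - X t.1 ω‖
            ≤ ‖Xn n t.1 ω - Xn n (gp i) ω‖ + (‖Xn n (gp i) ω - X (gp i) ω‖
              + ‖X (gp i) ω - X t.1 ω‖) := by
          refine (norm_sub_le_norm_sub_add_norm_sub _ (Xn n (gp i) ω) _).trans ?_
          gcongr
          exact norm_sub_le_norm_sub_add_norm_sub _ (X (gp i) ω) _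
        rw [norm_sub_rev (X (gp i) ω)] at htri
        have : 16 * (3/4:ℝ)^m ≤ θ/2 := by linarith
        rw [hε₁] at h3
        linarith
      exact ENNReal.ofReal_le_ofReal (Real.rpow_le_rpow (hS0 n ω) hStheta hp.le)
  calc (∫⁻ ω, ENNReal.ofReal ((⨆ t : Icc (0:ℝ) T, ‖Xn n t.1 ω - X t.1 ω‖) ^ p) ∂P)
      ≤ ∫⁻ ω, (ENNReal.ofReal (θ^p) + Bad.indicator (fun _ => BP) ω) ∂P :=
        lintegral_mono hpt
    _ = ENNReal.ofReal (θ^p) + BP * P Bad := by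
        rw [lintegral_add_left measurable_const, lintegral_const, measure_univ, mul_one,
          lintegral_indicator_const hBadmeas]
    _ ≤ ε/2 + (BP * (∑' j : ℕ, f₁ (j + m)) + BP * (∑' j : ℕ, f₂ (j + m)) + BP * G n) := by
        refine add_le_add hθε ?_
        calc BP * P Bad ≤ BP * (((∑' j : ℕ, f₁ (j + m)) + (∑' j : ℕ, f₂ (j + m))) + G n) :=
              mul_le_mul_right hPBad _
          _ = BP * (∑' j : ℕ, f₁ (j + m)) + BP * (∑' j : ℕ, f₂ (j + m)) + BP * G n := by
              rw [mul_add, mul_add]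
    _ ≤ ε/2 + (ε/2/2 + ε/2/2) := by
        refine add_le_add le_rfl (add_le_add hm1.le (hN n hn).le)
    _ = ε := by rw [ENNReal.add_halves, ENNReal.add_halves]
end
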